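/- Let k > 0 and let f : D → ℂ be holomorphic on the open unit disk D, with power series f(z) = Σ_{p≥0} a_p z^p. Suppose there is a constant P₀ ≥ 1 such that for all n ∈ ℕ, the n-th complex derivative satisfies sup_{z∈D} |f^(n)(z)| ≤ P₀^(n+1) · n^((1+1/k)·n) (with 0^0 = 1). Then there exist constants P₁, P₂ > 0 such that |a_p| ≤ P₁ · exp(-P₂ · p^(k/(k+1))) for all p ∈ ℕ. -/

import Mathlib

open Complex Metric Real
open scoped Topology NNReal ENNReal Nat

lemma my_iteratedDeriv_comp (f : ℂ → ℂ) (m n : ℕ) :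
    iteratedDeriv m (iteratedDeriv n f) = iteratedDeriv (m + n) f := by
  induction m generalizing n with
  | zero => simp
  | succ m ih =>
    rw [iteratedDeriv_succ', ← iteratedDeriv_succ, ih (n + 1),
      show m + (n + 1) = m + 1 + n from by omega]

lemma my_cauchy_est {g : ℂ → ℂ} (hg : DifferentiableOn ℂ g (ball (0 : ℂ) 1))
    {C : ℝ} (hC : ∀ z ∈ ball (0 : ℂ) 1, ‖g z‖ ≤ C) (m : ℕ) :
    ‖iteratedDeriv m g 0‖ ≤ C * m ! := by
  have hC0 : 0 ≤ C := le_trans (norm_nonneg _) (hC 0 (by simp))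
  have key : ∀ r : ℝ, 0 < r → r < 1 → ‖iteratedDeriv m g 0‖ * r ^ m ≤ C * m ! := by
    intro r hr0 hr1
    lift r to ℝ≥0 using hr0.le with r'
    have hr0' : 0 < r' := by exact_mod_cast hr0
    have hdiff : DifferentiableOn ℂ g (closedBall (0 : ℂ) r') :=
      hg.mono (closedBall_subset_ball (by exact_mod_cast hr1))
    have H : HasFPowerSeriesOnBall g (cauchyPowerSeries g 0 r') 0 r' :=
      hdiff.hasFPowerSeriesOnBall hr0'
    have hcoeff : (m ! : ℂ) * (cauchyPowerSeries g 0 r' m fun _ => (1 : ℂ)) =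
        iteratedDeriv m g 0 := by
      rw [iteratedDeriv_eq_iteratedFDeriv, ← H.factorial_smul (1 : ℂ) m, nsmul_eq_mul]
    have hmaps : ∀ θ : ℝ, circleMap 0 r' θ ∈ ball (0 : ℂ) 1 := by
      intro θ
      simp only [mem_ball_zero_iff]
      rw [show ‖circleMap 0 (r' : ℝ) θ‖ = |(r' : ℝ)| from by
        simpa using Complex.abs_circleMap_zero (r' : ℝ) θ]
      rw [_root_.abs_of_nonneg hr0.le]
      exact hr1
    have hcont : ContinuousOn (fun θ : ℝ => ‖g (circleMap 0 r' θ)‖) (Set.uIcc 0 (2 * π)) := by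
      apply ContinuousOn.norm
      apply hg.continuousOn.comp (Continuous.continuousOn (continuous_circleMap 0 r'))
      intro θ _
      exact hmaps θ
    have hint : (∫ θ : ℝ in (0)..2 * π, ‖g (circleMap 0 r' θ)‖) ≤ 2 * π * C := by
      have h1 : (∫ θ : ℝ in (0)..2 * π, ‖g (circleMap 0 r' θ)‖) ≤
          ∫ _ : ℝ in (0)..2 * π, C := by
        apply intervalIntegral.integral_mono_on Real.two_pi_pos.le
          (hcont.intervalIntegrable) (intervalIntegrable_const)
        intro θ _
        exact hC _ (hmaps θ)
      simpa using h1
    have hnorm := norm_cauchyPowerSeries_le g 0 r' m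
    have h1 : ‖cauchyPowerSeries g 0 r' m fun _ => (1 : ℂ)‖ ≤
        ‖cauchyPowerSeries g 0 (r' : ℝ) m‖ := by
      have := (cauchyPowerSeries g 0 (r' : ℝ) m).le_opNorm (fun _ => (1 : ℂ))
      simpa using this
    have h2 : ‖cauchyPowerSeries g 0 (r' : ℝ) m‖ ≤ C * ((r' : ℝ)⁻¹) ^ m := by
      refine hnorm.trans ?_
      rw [_root_.abs_of_nonneg hr0.le]
      apply mul_le_mul_of_nonneg_right _ (by positivity)
      calc (2 * π)⁻¹ * ∫ θ : ℝ in (0)..2 * π, ‖g (circleMap 0 r' θ)‖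
          ≤ (2 * π)⁻¹ * (2 * π * C) := by
            apply mul_le_mul_of_nonneg_left hint (by positivity)
        _ = C := by field_simp
    have h3 : ‖iteratedDeriv m g 0‖ ≤ m ! * (C * ((r' : ℝ)⁻¹) ^ m) := by
      rw [← hcoeff, norm_mul]
      have hn : ‖(m ! : ℂ)‖ = (m ! : ℝ) := by simp
      rw [hn]
      exact mul_le_mul_of_nonneg_left (h1.trans h2) (by positivity)
    calc ‖iteratedDeriv m g 0‖ * (r' : ℝ) ^ m
        ≤ (m ! * (C * ((r' : ℝ)⁻¹) ^ m)) * (r' : ℝ) ^ m :=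
          mul_le_mul_of_nonneg_right h3 (by positivity)
      _ = C * m ! := by
          field_simp
          ring_nf
          rw [mul_assoc, ← mul_pow, mul_inv_cancel₀ hr0.ne', one_pow, mul_one]
  have htend : Filter.Tendsto (fun r : ℝ => ‖iteratedDeriv m g 0‖ * r ^ m) (𝓝[<] (1 : ℝ))
      (𝓝 (‖iteratedDeriv m g 0‖)) := by
    have : Filter.Tendsto (fun r : ℝ => ‖iteratedDeriv m g 0‖ * r ^ m) (𝓝 (1 : ℝ))
        (𝓝 (‖iteratedDeriv m g 0‖ * 1 ^ m)) :=
      (continuous_const.mul (continuous_pow m)).tendsto 1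
    simpa using this.mono_left nhdsWithin_le_nhds
  refine le_of_tendsto htend ?_
  filter_upwards [Ioo_mem_nhdsLT_of_mem (Set.mem_Ioc.mpr ⟨zero_lt_one, le_refl 1⟩)] with r hr
  exact key r hr.1 hr.2

theorem stmt11 (k : ℝ) (hk : 0 < k) (f : ℂ → ℂ) (a : ℕ → ℂ)
    (hf : DifferentiableOn ℂ f (Metric.ball (0 : ℂ) 1))
    (hsum : ∀ z ∈ Metric.ball (0 : ℂ) 1, HasSum (fun p : ℕ => a p * z ^ p) (f z))
    (P₀ : ℝ) (hP₀ : 1 ≤ P₀)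
    (hder : ∀ n : ℕ, ∀ z ∈ Metric.ball (0 : ℂ) 1,
      ‖iteratedDerivWithin n f (Metric.ball (0 : ℂ) 1) z‖ ≤
        P₀ ^ (n + 1) * (n : ℝ) ^ ((1 + 1 / k) * n)) :
    ∃ P₁ P₂ : ℝ, 0 < P₁ ∧ 0 < P₂ ∧
      ∀ p : ℕ, ‖a p‖ ≤ P₁ * Real.exp (-P₂ * (p : ℝ) ^ (k / (k + 1))) := by
  -- power series representation of `f` with coefficients `a`
  have hps : HasFPowerSeriesOnBall f (FormalMultilinearSeries.ofScalars ℂ a) 0 1 := by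
    constructor
    · refine ENNReal.le_of_forall_nnreal_lt ?_
      intro r hr
      have hr1 : (r : ℝ) < 1 := by exact_mod_cast hr
      have hz : ((r : ℝ) : ℂ) ∈ ball (0 : ℂ) 1 := by
        simp only [mem_ball_zero_iff, Complex.norm_real]
        simpa [Real.norm_eq_abs, _root_.abs_of_nonneg r.coe_nonneg] using hr1
      have hs := (hsum _ hz).summable
      apply FormalMultilinearSeries.le_radius_of_tendsto _ (l := 0)
      have h0 := (hs.tendsto_atTop_zero).norm
      simp only [norm_zero] at h0
      convert h0 using 2 with n
      rw [FormalMultilinearSeries.ofScalars_norm, norm_mul, norm_pow, Complex.norm_real,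
        Real.norm_eq_abs, _root_.abs_of_nonneg r.coe_nonneg]
    · exact one_pos
    · intro y hy
      have h1 : y ∈ Metric.eball (0 : ℂ) ((1 : ℝ≥0) : ℝ≥0∞) := hy
      rw [Metric.emetric_ball_nnreal] at h1
      have h2 : y ∈ ball (0 : ℂ) 1 := by simpa using h1
      have := hsum y h2
      simp only [zero_add]
      have heq : (fun n => (FormalMultilinearSeries.ofScalars ℂ a n) fun _ => y) =
          fun n => a n * y ^ n := by
        funext n
        rw [FormalMultilinearSeries.ofScalars_apply_eq, smul_eq_mul]
      rw [heq]
      exact this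
  -- coefficient / derivative identity
  have hap : ∀ q : ℕ, ‖a q‖ * (q ! : ℝ) = ‖iteratedDeriv q f 0‖ := by
    intro q
    have h := hps.factorial_smul (1 : ℂ) q
    rw [nsmul_eq_mul, FormalMultilinearSeries.ofScalars_apply_eq,
      ← iteratedDeriv_eq_iteratedFDeriv] at h
    rw [← h]
    simp [norm_mul, mul_comm]
  -- derivatives are differentiable on the ball
  have hfa : AnalyticOnNhd ℂ f (ball (0 : ℂ) 1) := hf.analyticOnNhd isOpen_ball
  have hgn : ∀ n : ℕ, DifferentiableOn ℂ (iteratedDeriv n f) (ball (0 : ℂ) 1) := by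
    intro n
    rw [iteratedDeriv_eq_iterate]
    exact (hfa.iterated_deriv n).differentiableOn
  -- bound for global iterated derivatives
  have hbound : ∀ n : ℕ, ∀ z ∈ ball (0 : ℂ) 1,
      ‖iteratedDeriv n f z‖ ≤ P₀ ^ (n + 1) * (n : ℝ) ^ ((1 + 1 / k) * n) := by
    intro n z hz
    have h := hder n z hz
    rwa [iteratedDerivWithin_eq_iteratedFDerivWithin,
      iteratedFDerivWithin_of_isOpen n isOpen_ball hz, ← iteratedDeriv_eq_iteratedFDeriv] at h
  -- main coefficient estimate
  have hmain : ∀ p j : ℕ, j ≤ p → ‖a p‖ * (p.descFactorial j : ℝ) ≤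
      P₀ ^ (j + 1) * (j : ℝ) ^ ((1 + 1 / k) * j) := by
    intro p j hjp
    have h1 := my_cauchy_est (hgn j) (hbound j) (p - j)
    rw [my_iteratedDeriv_comp, Nat.sub_add_cancel hjp, ← hap p] at h1
    have hfac : (((p - j)! : ℕ) : ℝ) * (p.descFactorial j : ℝ) = (p ! : ℝ) := by
      exact_mod_cast congrArg (fun t : ℕ => (t : ℝ)) (Nat.factorial_mul_descFactorial hjp)
    have hpos : (0 : ℝ) < (((p - j)! : ℕ) : ℝ) := by positivity
    have h2 : (‖a p‖ * (p.descFactorial j : ℝ)) * (((p - j)! : ℕ) : ℝ) ≤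
        (P₀ ^ (j + 1) * (j : ℝ) ^ ((1 + 1 / k) * j)) * (((p - j)! : ℕ) : ℝ) := by
      calc (‖a p‖ * (p.descFactorial j : ℝ)) * (((p - j)! : ℕ) : ℝ)
          = ‖a p‖ * (p ! : ℝ) := by rw [← hfac]; ring
        _ ≤ _ := by rw [mul_comm (P₀ ^ (j + 1) * (j : ℝ) ^ ((1 + 1 / k) * j))] at h1 ⊢; exact h1
    exact le_of_mul_le_mul_right h2 hpos
  -- numerical part
  have hκpos : 0 < k / (k + 1) := div_pos hk (by linarith)
  have hκle1 : k / (k + 1) ≤ 1 := by rw [div_le_one (by linarith)]; linarith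
  set κ := k / (k + 1) with hκdef
  have hE2 : (2 : ℝ) ≤ Real.exp 1 := by have := Real.add_one_le_exp 1; linarith
  set c := 2 * Real.exp 1 * P₀ with hcdef
  have hc2 : (2 : ℝ) ≤ c := by nlinarith [Real.exp_pos 1]
  have hc0 : (0 : ℝ) < c := by linarith
  refine ⟨Real.exp 1 * P₀, c ^ (-κ), by positivity, Real.rpow_pos_of_pos hc0 _, ?_⟩
  intro p
  have hA : (0 : ℝ) ≤ ‖a p‖ := norm_nonneg _
  set A := ‖a p‖ with hAdef
  set x := ((p : ℝ) / c) ^ κ with hxdef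
  have hx0 : 0 ≤ x := Real.rpow_nonneg (by positivity) _
  set n := ⌊x⌋₊ with hndef
  have hnx : (n : ℝ) ≤ x := Nat.floor_le hx0
  have hxn : x < n + 1 := Nat.lt_floor_add_one x
  have habs : A ≤ P₀ * Real.exp (-(n : ℝ)) := by
    rcases Nat.eq_zero_or_pos n with h0 | h1
    · have h := hmain p 0 (Nat.zero_le p)
      simp only [Nat.descFactorial_zero, Nat.cast_one, mul_one, Nat.cast_zero, mul_zero,
        Real.rpow_zero, pow_one] at h
      rw [h0]
      simpa using h
    · have hn1 : (1 : ℝ) ≤ (n : ℝ) := by exact_mod_cast h1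
      have hx1 : (1 : ℝ) ≤ x := le_trans hn1 hnx
      have hpc1 : (1 : ℝ) ≤ (p : ℝ) / c := by
        by_contra hlt
        push_neg at hlt
        have := Real.rpow_lt_one (by positivity) hlt hκpos
        rw [← hxdef] at this
        linarith
      have hpc : c ≤ (p : ℝ) := (one_le_div hc0).mp hpc1
      have hp0 : (0 : ℝ) < (p : ℝ) := lt_of_lt_of_le hc0 hpc
      have hxle : x ≤ (p : ℝ) / c := by
        rw [hxdef]
        nth_rewrite 2 [← Real.rpow_one ((p : ℝ) / c)]
        exact Real.rpow_le_rpow_of_exponent_le hpc1 hκle1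
      have hpc2 : (p : ℝ) / c ≤ (p : ℝ) / 2 := by gcongr
      have hnp : (n : ℝ) ≤ (p : ℝ) := by
        refine le_trans hnx (le_trans hxle ?_)
        exact div_le_self hp0.le (by linarith)
      have hnp' : n ≤ p := by exact_mod_cast hnp
      have key := hmain p n hnp'
      have hnhalf : (n : ℝ) ≤ (p : ℝ) / 2 := le_trans (le_trans hnx hxle) hpc2
      have hdesc : ((p : ℝ) / 2) ^ n ≤ (p.descFactorial n : ℝ) := by
        have h1' : (((p + 1 - n) ^ n : ℕ) : ℝ) ≤ (p.descFactorial n : ℝ) := by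
          exact_mod_cast Nat.pow_sub_le_descFactorial p n
        refine le_trans ?_ h1'
        push_cast [Nat.cast_sub (by omega : n ≤ p + 1)]
        apply pow_le_pow_left₀ (by positivity)
        linarith
      have hB0 : (0 : ℝ) ≤ (n : ℝ) ^ ((1 : ℝ) + 1 / k) := Real.rpow_nonneg (by positivity) _
      have hcore : c * (n : ℝ) ^ ((1 : ℝ) + 1 / k) ≤ (p : ℝ) := by
        have h3 : (n : ℝ) ^ ((1 : ℝ) + 1 / k) ≤ x ^ ((1 : ℝ) + 1 / k) :=
          Real.rpow_le_rpow (by positivity) hnx (by positivity)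
        have h4 : x ^ ((1 : ℝ) + 1 / k) = (p : ℝ) / c := by
          rw [hxdef, ← Real.rpow_mul (by positivity)]
          rw [show κ * (1 + 1 / k) = 1 by rw [hκdef]; field_simp]
          exact Real.rpow_one _
        calc c * (n : ℝ) ^ ((1 : ℝ) + 1 / k) ≤ c * ((p : ℝ) / c) := by
              apply mul_le_mul_of_nonneg_left (h3.trans h4.le) hc0.le
          _ = (p : ℝ) := by field_simp
      have hsplit : (n : ℝ) ^ ((1 + 1 / k) * (n : ℝ)) = ((n : ℝ) ^ ((1 : ℝ) + 1 / k)) ^ n := by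
        rw [Real.rpow_mul (Nat.cast_nonneg n), Real.rpow_natCast]
      rw [hsplit, pow_succ] at key
      have hPB : P₀ * (n : ℝ) ^ ((1 : ℝ) + 1 / k) ≤ (p : ℝ) / (2 * Real.exp 1) := by
        rw [le_div_iff₀ (by positivity)]
        calc P₀ * (n : ℝ) ^ ((1 : ℝ) + 1 / k) * (2 * Real.exp 1)
            = c * (n : ℝ) ^ ((1 : ℝ) + 1 / k) := by rw [hcdef]; ring
          _ ≤ (p : ℝ) := hcore
      have hchain : A * ((p : ℝ) / 2) ^ n ≤ (P₀ * Real.exp (-(n : ℝ))) * ((p : ℝ) / 2) ^ n := by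
        calc A * ((p : ℝ) / 2) ^ n ≤ A * (p.descFactorial n : ℝ) :=
              mul_le_mul_of_nonneg_left hdesc hA
          _ ≤ P₀ ^ n * P₀ * ((n : ℝ) ^ ((1 : ℝ) + 1 / k)) ^ n := key
          _ = P₀ * (P₀ * (n : ℝ) ^ ((1 : ℝ) + 1 / k)) ^ n := by rw [mul_pow]; ring
          _ ≤ P₀ * ((p : ℝ) / (2 * Real.exp 1)) ^ n := by
              apply mul_le_mul_of_nonneg_left _ (by linarith)
              exact pow_le_pow_left₀ (by positivity) hPB n
          _ = (P₀ * Real.exp (-(n : ℝ))) * ((p : ℝ) / 2) ^ n := by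
              rw [show (p : ℝ) / (2 * Real.exp 1) = ((p : ℝ) / 2) * (Real.exp 1)⁻¹ by
                field_simp]
              rw [mul_pow, ← Real.exp_neg, ← Real.exp_nat_mul]
              ring_nf
      exact le_of_mul_le_mul_right hchain (by positivity)
  have hxval : c ^ (-κ) * (p : ℝ) ^ κ = x := by
    rw [hxdef, Real.div_rpow (Nat.cast_nonneg p) hc0.le, Real.rpow_neg hc0.le]
    ring
  have hfinal : P₀ * Real.exp (-(n : ℝ)) ≤ (Real.exp 1 * P₀) * Real.exp (-x) := by
    have h6 : Real.exp (-(n : ℝ)) ≤ Real.exp (1 - x) := Real.exp_le_exp.mpr (by linarith)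
    calc P₀ * Real.exp (-(n : ℝ)) ≤ P₀ * Real.exp (1 - x) :=
          mul_le_mul_of_nonneg_left h6 (by linarith)
      _ = (Real.exp 1 * P₀) * Real.exp (-x) := by
          rw [show (1 : ℝ) - x = 1 + (-x) by ring, Real.exp_add]
          ring
  calc A ≤ P₀ * Real.exp (-(n : ℝ)) := habs
    _ ≤ (Real.exp 1 * P₀) * Real.exp (-x) := hfinal
    _ = (Real.exp 1 * P₀) * Real.exp (-(c ^ (-κ)) * (p : ℝ) ^ κ) := by
        rw [show -(c ^ (-κ)) * (p : ℝ) ^ κ = -(c ^ (-κ) * (p : ℝ) ^ κ) by ring, hxval]
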